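/- Let F be a field, p a monic irreducible polynomial of degree s over F, let α_1 ≥ α_2 ≥ … ≥ α_m ≥ 1 be integers, and let G = diag(G_1,…,G_m) where G_i is the generalized Jordan block of size α_i associated with p. Suppose X is a square matrix over F commuting with G, and partition X into blocks X_{i,j} of size sα_i × sα_j for i,j = 1,…,m conformally with the block structure of G. Then for all i,j: (1) if α_i = α_j then X_{i,j} commutes with G_i; (2) if α_i < α_j then the last s(α_j - α_i) columns of X_{i,j} are zero and the left sα_i × sα_i submatrix of X_{i,j} commutes with G_i; (3) if α_i > α_j then the first s(α_i - α_j) rows of X_{i,j} are zero and the bottom sα_j × sα_j submatrix of X_{i,j} commutes with G_j. -/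

import Mathlib

open Matrix Polynomial

/-- The companion matrix of a monic polynomial `p` of degree `s`:
ones on the first subdiagonal, `-(coefficients of p)` in the last column. -/
def companionMat (F : Type*) [Field F] (s : ℕ) (p : Polynomial F) :
    Matrix (Fin s) (Fin s) F :=
  Matrix.of fun i j =>
    if (j : ℕ) = s - 1 then -p.coeff (i : ℕ)
    else if (i : ℕ) = (j : ℕ) + 1 then 1 else 0

/-- The matrix `E` whose `(1,s)` entry is `1` and all other entries are `0`. -/
def Emat (F : Type*) [Field F] (s : ℕ) : Matrix (Fin s) (Fin s) F :=
  Matrix.of fun i j => if (i : ℕ) = 0 ∧ (j : ℕ) = s - 1 then 1 else 0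

/-- The generalized Jordan block of size `ℓ` associated with `p` (degree `s`):
the `sℓ × sℓ` block matrix with `ℓ` diagonal `s×s` blocks equal to the companion
matrix `C` of `p`, blocks `E` directly below the diagonal, zeros elsewhere.
Rows/columns are indexed by `Fin ℓ × Fin s` (block index, index within block). -/
def genJordanBlock (F : Type*) [Field F] (s ℓ : ℕ) (p : Polynomial F) :
    Matrix (Fin ℓ × Fin s) (Fin ℓ × Fin s) F :=
  Matrix.of fun x y =>
    if x.1 = y.1 then companionMat F s p x.2 y.2
    else if (x.1 : ℕ) = (y.1 : ℕ) + 1 then Emat F s x.2 y.2 else 0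

/-- The generalized Jordan form `diag(G_1, …, G_m)` where `G_i` is the generalized
Jordan block of size `α i` associated with `p`. Rows/columns are indexed by
`Σ i : Fin m, Fin (α i) × Fin s`. -/
def genJordanForm (F : Type*) [Field F] (s m : ℕ) (α : Fin m → ℕ) (p : Polynomial F) :
    Matrix (Σ i : Fin m, Fin (α i) × Fin s) (Σ i : Fin m, Fin (α i) × Fin s) F :=
  Matrix.of fun x y =>
    if x.1 = y.1 then
      (if (x.2.1 : ℕ) = (y.2.1 : ℕ) then companionMat F s p x.2.2 y.2.2
       else if (x.2.1 : ℕ) = (y.2.1 : ℕ) + 1 then Emat F s x.2.2 y.2.2 else 0)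
    else 0


section Helpers

variable {F : Type*} [Field F] {s : ℕ}

lemma genJordanBlock_apply (p : Polynomial F) (ℓ : ℕ) (x y : Fin ℓ × Fin s) :
    genJordanBlock F s ℓ p x y =
      if (x.1 : ℕ) = (y.1 : ℕ) then
        (if (y.2 : ℕ) = s - 1 then -p.coeff (x.2 : ℕ)
         else if (x.2 : ℕ) = (y.2 : ℕ) + 1 then 1 else 0)
      else if (x.1 : ℕ) = (y.1 : ℕ) + 1 then
        (if (x.2 : ℕ) = 0 ∧ (y.2 : ℕ) = s - 1 then 1 else 0)
      else 0 := by
  simp only [genJordanBlock, companionMat, Emat, Matrix.of_apply, Fin.ext_iff]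

lemma jpow_col (p : Polynomial F) (ℓ : ℕ) (hs : 0 < s) :
    ∀ n, n < s → ∀ (x : Fin ℓ × Fin s) (k : Fin ℓ),
    (genJordanBlock F s ℓ p ^ n) x (k, ⟨0, hs⟩) =
      if (x.1 : ℕ) = (k : ℕ) ∧ (x.2 : ℕ) = n then 1 else 0 := by
  intro n
  induction n with
  | zero =>
    intro _ x k
    simp [Matrix.one_apply, Prod.ext_iff, Fin.ext_iff, eq_comm]
  | succ n ih =>
    intro hn x k
    have hn' : n < s := by omega
    rw [pow_succ', Matrix.mul_apply]
    rw [Fintype.sum_eq_single ((k, ⟨n, hn'⟩) : Fin ℓ × Fin s)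
      (fun w hw => by
        rw [ih hn' w k,
          if_neg (show ¬((w.1 : ℕ) = (k : ℕ) ∧ (w.2 : ℕ) = n) from
            fun h => hw (Prod.ext (Fin.ext h.1) (Fin.ext h.2))), mul_zero])]
    have hcol := ih hn' (Prod.mk k (Fin.mk n hn')) k
    simp only [Fin.val_mk, and_self, if_true, if_pos] at hcol
    rw [hcol, mul_one, genJordanBlock_apply]
    simp only [Fin.val_mk]
    have hne : ¬ (n : ℕ) = s - 1 := by omega
    by_cases h1 : (x.1 : ℕ) = (k : ℕ)
    · rw [if_pos h1, if_neg hne]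
      simp [h1]
    · rw [if_neg h1,
        if_neg (show ¬((x.1:ℕ)=(k:ℕ) ∧ (x.2:ℕ)=n+1) from fun h => h1 h.1)]
      by_cases h2 : (x.1 : ℕ) = (k : ℕ) + 1
      · rw [if_pos h2, if_neg (fun h => hne h.2)]
      · rw [if_neg h2]

def shiftMat (F : Type*) [Field F] (s ℓ : ℕ) : Matrix (Fin ℓ × Fin s) (Fin ℓ × Fin s) F :=
  Matrix.of fun x y => if (x.1 : ℕ) = (y.1 : ℕ) + 1 ∧ (x.2 : ℕ) = (y.2 : ℕ) then 1 else 0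

lemma jpow_s_col (p : Polynomial F) (ℓ : ℕ) (hs : 0 < s)
    (x : Fin ℓ × Fin s) (k : Fin ℓ) :
    (genJordanBlock F s ℓ p ^ s) x (k, ⟨0, hs⟩) =
      (if (x.1 : ℕ) = (k : ℕ) then -p.coeff (x.2 : ℕ) else 0) +
      (if (x.1 : ℕ) = (k : ℕ) + 1 ∧ (x.2 : ℕ) = 0 then 1 else 0) := by
  obtain ⟨t, rfl⟩ : ∃ t, s = t + 1 := ⟨s - 1, by omega⟩
  rw [pow_succ', Matrix.mul_apply]
  rw [Fintype.sum_eq_single (Prod.mk k (Fin.mk t (by omega)))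
    (fun w hw => by
      rw [jpow_col p ℓ hs t (by omega) w k,
        if_neg (show ¬((w.1 : ℕ) = (k : ℕ) ∧ (w.2 : ℕ) = t) from
          fun h => hw (Prod.ext (Fin.ext h.1) (Fin.ext h.2))), mul_zero])]
  have hcol := jpow_col p ℓ hs t (by omega) (Prod.mk k (Fin.mk t (by omega))) k
  simp only [Fin.val_mk, and_self, if_true, if_pos] at hcol
  rw [hcol, mul_one, genJordanBlock_apply]
  simp only [Fin.val_mk]
  have hx2 := x.2.isLt
  split_ifs
  all_goals try (exfalso; omega)
  all_goals ring

lemma aeval_col0 (p : Polynomial F) (ℓ : ℕ) (hs : 0 < s)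
    (hmonic : p.Monic) (hdeg : p.natDegree = s)
    (x : Fin ℓ × Fin s) (k : Fin ℓ) :
    (Polynomial.aeval (genJordanBlock F s ℓ p) p) x (k, ⟨0, hs⟩) =
      if (x.1 : ℕ) = (k : ℕ) + 1 ∧ (x.2 : ℕ) = 0 then 1 else 0 := by
  rw [Polynomial.aeval_eq_sum_range, hdeg]
  rw [Matrix.sum_apply]
  simp only [Matrix.smul_apply, smul_eq_mul]
  rw [Finset.sum_range_succ]
  have hc : p.coeff s = 1 := by
    rw [← hdeg]; exact hmonic.coeff_natDegree
  rw [hc, one_mul, jpow_s_col p ℓ hs x k]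
  have hsum : ∑ n ∈ Finset.range s,
      p.coeff n * (genJordanBlock F s ℓ p ^ n) x (k, ⟨0, hs⟩) =
      if (x.1 : ℕ) = (k : ℕ) then p.coeff (x.2 : ℕ) else 0 := by
    by_cases h1 : (x.1 : ℕ) = (k : ℕ)
    · rw [if_pos h1]
      rw [Finset.sum_eq_single_of_mem (x.2 : ℕ) (Finset.mem_range.mpr x.2.isLt)
        (fun n hmem hn => by
          rw [jpow_col p ℓ hs n (Finset.mem_range.mp hmem) x k,
            if_neg (fun h => hn (h.2.symm)), mul_zero])]
      rw [jpow_col p ℓ hs (x.2 : ℕ) x.2.isLt x k, if_pos ⟨h1, rfl⟩, mul_one]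
    · rw [if_neg h1]
      apply Finset.sum_eq_zero
      intro n hn
      rw [jpow_col p ℓ hs n (Finset.mem_range.mp hn) x k, if_neg (fun h => h1 h.1), mul_zero]
  rw [hsum]
  by_cases h1 : (x.1 : ℕ) = (k : ℕ)
  · rw [if_pos h1, if_pos h1, if_neg (by omega)]
    ring
  · rw [if_neg h1, if_neg h1]
    ring

lemma aeval_comm_pow {n : Type*} [Fintype n] [DecidableEq n]
    (M : Matrix n n F) (q : Polynomial F) (a : ℕ) :
    (Polynomial.aeval M q) * M ^ a = M ^ a * (Polynomial.aeval M q) := by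
  have h : Polynomial.aeval M (q * X ^ a) = Polynomial.aeval M (X ^ a * q) := by
    rw [mul_comm]
  simpa [_root_.map_mul, _root_.map_pow, Polynomial.aeval_X] using h

lemma aeval_genJordanBlock (p : Polynomial F) (ℓ : ℕ) (hs : 0 < s)
    (hmonic : p.Monic) (hdeg : p.natDegree = s) :
    Polynomial.aeval (genJordanBlock F s ℓ p) p = shiftMat F s ℓ := by
  ext x y
  obtain ⟨k, a⟩ := y
  set J := genJordanBlock F s ℓ p with hJ
  have h1 : (Polynomial.aeval J p) x (k, a) =
      ((Polynomial.aeval J p) * J ^ (a : ℕ)) x (k, ⟨0, hs⟩) := by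
    rw [Matrix.mul_apply]
    rw [Fintype.sum_eq_single (Prod.mk k a)
      (fun w hw => by
        rw [jpow_col p ℓ hs (a : ℕ) a.isLt w k,
          if_neg (show ¬((w.1 : ℕ) = (k : ℕ) ∧ (w.2 : ℕ) = (a : ℕ)) from
            fun h => hw (Prod.ext (Fin.ext h.1) (Fin.ext h.2))), mul_zero])]
    have hcol := jpow_col p ℓ hs (a : ℕ) a.isLt (Prod.mk k a) k
    simp only [Fin.val_mk, and_self, if_true, if_pos] at hcol
    rw [hcol, mul_one]
  rw [h1, aeval_comm_pow, Matrix.mul_apply]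
  by_cases hk : (k : ℕ) + 1 < ℓ
  · rw [Fintype.sum_eq_single (Prod.mk (Fin.mk ((k:ℕ)+1) hk) (Fin.mk 0 hs))
      (fun w hw => by
        rw [aeval_col0 p ℓ hs hmonic hdeg w k,
          if_neg (show ¬((w.1 : ℕ) = (k : ℕ) + 1 ∧ (w.2 : ℕ) = 0) from
            fun h => hw (Prod.ext (Fin.ext h.1) (Fin.ext h.2))), mul_zero])]
    have hc := aeval_col0 p ℓ hs hmonic hdeg
      (Prod.mk (Fin.mk ((k:ℕ)+1) hk) (Fin.mk 0 hs)) k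
    simp only [Fin.val_mk, and_self, if_true, if_pos] at hc
    rw [hc, mul_one]
    have hp := jpow_col p ℓ hs (a : ℕ) a.isLt x (Fin.mk ((k:ℕ)+1) hk)
    rw [hp]
    simp only [shiftMat, Matrix.of_apply, Fin.val_mk]
  · have hz : ∀ w : Fin ℓ × Fin s,
        (J ^ (a : ℕ)) x w * (Polynomial.aeval J p) w (k, ⟨0, hs⟩) = 0 := by
      intro w
      rw [aeval_col0 p ℓ hs hmonic hdeg w k,
        if_neg (fun h => by have := w.1.isLt; omega), mul_zero]
    rw [Finset.sum_eq_zero (fun w _ => hz w)]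
    simp only [shiftMat, Matrix.of_apply]
    rw [if_neg (fun h => by have := x.1.isLt; omega)]

lemma shiftMat_pow (ℓ n : ℕ) (x y : Fin ℓ × Fin s) :
    (shiftMat F s ℓ ^ n) x y =
      if (x.1 : ℕ) = (y.1 : ℕ) + n ∧ (x.2 : ℕ) = (y.2 : ℕ) then 1 else 0 := by
  induction n generalizing y with
  | zero => simp [Matrix.one_apply, Prod.ext_iff, Fin.ext_iff]
  | succ n ih =>
    rw [pow_succ, Matrix.mul_apply]
    by_cases hy : (y.1 : ℕ) + 1 < ℓ
    · rw [Fintype.sum_eq_single (Prod.mk (Fin.mk ((y.1:ℕ)+1) hy) y.2)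
        (fun w hw => by
          rw [show shiftMat F s ℓ w y =
              if (w.1 : ℕ) = (y.1 : ℕ) + 1 ∧ (w.2 : ℕ) = (y.2 : ℕ) then 1 else 0 from rfl,
            if_neg (fun h => hw (Prod.ext (Fin.ext h.1) (Fin.ext h.2))), mul_zero])]
      rw [show shiftMat F s ℓ (Prod.mk (Fin.mk ((y.1:ℕ)+1) hy) y.2) y = 1 by
        simp [shiftMat]]
      rw [mul_one, ih]
      simp only [Fin.val_mk]
      rw [show (y.1:ℕ) + 1 + n = (y.1:ℕ) + (n+1) from by omega]
    · rw [Finset.sum_eq_zero (fun w _ => by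
        rw [show shiftMat F s ℓ w y =
            if (w.1 : ℕ) = (y.1 : ℕ) + 1 ∧ (w.2 : ℕ) = (y.2 : ℕ) then 1 else 0 from rfl,
          if_neg (fun h => by have := w.1.isLt; omega), mul_zero])]
      rw [if_neg (fun h => by have := x.1.isLt; omega)]

lemma shiftMat_pow_self (ℓ : ℕ) : shiftMat F s ℓ ^ ℓ = 0 := by
  ext x y
  rw [shiftMat_pow, if_neg (fun h => by have := x.1.isLt; omega)]
  simp

lemma intertwine_aeval {ℓ ℓ' : ℕ} (p q : Polynomial F)
    (Y : Matrix (Fin ℓ × Fin s) (Fin ℓ' × Fin s) F)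
    (hY : Y * genJordanBlock F s ℓ' p = genJordanBlock F s ℓ p * Y) :
    Y * Polynomial.aeval (genJordanBlock F s ℓ' p) q
      = Polynomial.aeval (genJordanBlock F s ℓ p) q * Y := by
  have hpow : ∀ n, Y * (genJordanBlock F s ℓ' p) ^ n
      = (genJordanBlock F s ℓ p) ^ n * Y := by
    intro n
    induction n with
    | zero => simp
    | succ n ih =>
      rw [pow_succ, ← Matrix.mul_assoc, ih, Matrix.mul_assoc, hY,
        ← Matrix.mul_assoc, ← pow_succ]
  rw [Polynomial.aeval_eq_sum_range, Polynomial.aeval_eq_sum_range,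
    Matrix.mul_sum, Matrix.sum_mul]
  apply Finset.sum_congr rfl
  intro i _
  rw [Matrix.mul_smul, Matrix.smul_mul, hpow]

lemma vanish_cols {ℓ ℓ' : ℕ} (hs : 0 < s) (p : Polynomial F)
    (hmonic : p.Monic) (hdeg : p.natDegree = s) (hlt : ℓ < ℓ')
    (Y : Matrix (Fin ℓ × Fin s) (Fin ℓ' × Fin s) F)
    (hY : Y * genJordanBlock F s ℓ' p = genJordanBlock F s ℓ p * Y) :
    ∀ (x : Fin ℓ × Fin s) (y : Fin ℓ' × Fin s), ℓ ≤ (y.1 : ℕ) → Y x y = 0 := by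
  intro x y hy
  have h := intertwine_aeval p (p ^ ℓ) Y hY
  rw [_root_.map_pow, _root_.map_pow, aeval_genJordanBlock p ℓ' hs hmonic hdeg,
    aeval_genJordanBlock p ℓ hs hmonic hdeg, shiftMat_pow_self, Matrix.zero_mul] at h
  have hy1 : (y.1 : ℕ) - ℓ < ℓ' := by have := y.1.isLt; omega
  have h2 := congrFun (congrFun h x) (Prod.mk (Fin.mk ((y.1:ℕ) - ℓ) hy1) y.2)
  rw [Matrix.mul_apply] at h2
  rw [Fintype.sum_eq_single y
    (fun w hw => by
      rw [shiftMat_pow, if_neg (show ¬((w.1:ℕ) = (y.1:ℕ) - ℓ + ℓ ∧ (w.2:ℕ) = (y.2:ℕ)) from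
        fun hc => hw (Prod.ext (Fin.ext (by omega)) (Fin.ext hc.2))), mul_zero])] at h2
  rw [shiftMat_pow, if_pos ⟨by simp; omega, by simp⟩, mul_one] at h2
  simpa using h2

lemma vanish_rows {ℓ ℓ' : ℕ} (hs : 0 < s) (p : Polynomial F)
    (hmonic : p.Monic) (hdeg : p.natDegree = s) (hgt : ℓ' < ℓ)
    (Y : Matrix (Fin ℓ × Fin s) (Fin ℓ' × Fin s) F)
    (hY : Y * genJordanBlock F s ℓ' p = genJordanBlock F s ℓ p * Y) :
    ∀ (x : Fin ℓ × Fin s) (y : Fin ℓ' × Fin s), (x.1 : ℕ) < ℓ - ℓ' → Y x y = 0 := by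
  intro x y hx
  have h := intertwine_aeval p (p ^ ℓ') Y hY
  rw [_root_.map_pow, _root_.map_pow, aeval_genJordanBlock p ℓ' hs hmonic hdeg,
    aeval_genJordanBlock p ℓ hs hmonic hdeg, shiftMat_pow_self, Matrix.mul_zero] at h
  have hx1 : (x.1 : ℕ) + ℓ' < ℓ := by omega
  have h2 := congrFun (congrFun h.symm (Prod.mk (Fin.mk ((x.1:ℕ) + ℓ') hx1) x.2)) y
  rw [Matrix.mul_apply] at h2
  rw [Fintype.sum_eq_single x
    (fun w hw => by
      rw [shiftMat_pow, if_neg (show ¬(((x.1:ℕ) + ℓ' = (w.1:ℕ) + ℓ') ∧ ((x.2:ℕ) = (w.2:ℕ))) from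
        fun hc => hw (Prod.ext (Fin.ext (by omega)) (Fin.ext hc.2.symm))), zero_mul])] at h2
  rw [shiftMat_pow, if_pos ⟨by simp, by simp⟩, one_mul] at h2
  simpa using h2

def embL {s ℓ ℓ' : ℕ} (hle : ℓ ≤ ℓ') : Fin ℓ × Fin s ↪ Fin ℓ' × Fin s where
  toFun := fun w => (⟨(w.1 : ℕ), lt_of_lt_of_le w.1.isLt hle⟩, w.2)
  inj' := by
    intro a b h
    simp only [Prod.mk.injEq, Fin.mk.injEq] at h
    exact Prod.ext (Fin.ext h.1) h.2

lemma subblock_comm_left {ℓ ℓ' : ℕ} (p : Polynomial F) (hle : ℓ ≤ ℓ')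
    (Y : Matrix (Fin ℓ × Fin s) (Fin ℓ' × Fin s) F)
    (hY : Y * genJordanBlock F s ℓ' p = genJordanBlock F s ℓ p * Y)
    (hvan : ∀ (x : Fin ℓ × Fin s) (w : Fin ℓ' × Fin s), ℓ ≤ (w.1 : ℕ) → Y x w = 0) :
    (Matrix.of fun x y : Fin ℓ × Fin s => Y x (embL hle y)) * genJordanBlock F s ℓ p
      = genJordanBlock F s ℓ p * (Matrix.of fun x y : Fin ℓ × Fin s => Y x (embL hle y)) := by
  have hJ : ∀ w z : Fin ℓ × Fin s, genJordanBlock F s ℓ p w z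
      = genJordanBlock F s ℓ' p (embL hle w) (embL hle z) := by
    intro w z
    rw [genJordanBlock_apply, genJordanBlock_apply]
    rfl
  ext x y
  rw [Matrix.mul_apply, Matrix.mul_apply]
  have e1 : ∑ w : Fin ℓ × Fin s,
      (Matrix.of fun x y : Fin ℓ × Fin s => Y x (embL hle y)) x w * genJordanBlock F s ℓ p w y
      = ∑ w : Fin ℓ × Fin s, Y x (embL hle w) * genJordanBlock F s ℓ' p (embL hle w) (embL hle y) :=
    Finset.sum_congr rfl (fun w _ => by rw [Matrix.of_apply, hJ])
  have e2 : ∑ w : Fin ℓ × Fin s, Y x (embL hle w) * genJordanBlock F s ℓ' p (embL hle w) (embL hle y)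
      = ∑ w' : Fin ℓ' × Fin s, Y x w' * genJordanBlock F s ℓ' p w' (embL hle y) := by
    rw [← Finset.sum_map Finset.univ (embL hle)
      (fun w' => Y x w' * genJordanBlock F s ℓ' p w' (embL hle y))]
    apply Finset.sum_subset (Finset.subset_univ _)
    intro w' _ hw'
    have hge : ℓ ≤ (w'.1 : ℕ) := by
      by_contra hc
      push_neg at hc
      exact hw' (Finset.mem_map.mpr ⟨(⟨(w'.1 : ℕ), hc⟩, w'.2), Finset.mem_univ _, rfl⟩)
    rw [hvan x w' hge, zero_mul]
  rw [e1, e2, ← Matrix.mul_apply, hY, Matrix.mul_apply]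
  exact Finset.sum_congr rfl (fun w _ => by rw [Matrix.of_apply])

def embB {s ℓ ℓ' : ℕ} (hle : ℓ' ≤ ℓ) : Fin ℓ' × Fin s ↪ Fin ℓ × Fin s where
  toFun := fun w => (⟨(ℓ - ℓ') + (w.1 : ℕ), by have := w.1.isLt; omega⟩, w.2)
  inj' := by
    intro a b h
    simp only [Prod.mk.injEq, Fin.mk.injEq] at h
    exact Prod.ext (Fin.ext (by omega)) h.2

lemma subblock_comm_bottom {ℓ ℓ' : ℕ} (p : Polynomial F) (hle : ℓ' ≤ ℓ)
    (Y : Matrix (Fin ℓ × Fin s) (Fin ℓ' × Fin s) F)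
    (hY : Y * genJordanBlock F s ℓ' p = genJordanBlock F s ℓ p * Y)
    (hvan : ∀ (x : Fin ℓ × Fin s) (w : Fin ℓ' × Fin s), (x.1 : ℕ) < ℓ - ℓ' → Y x w = 0) :
    (Matrix.of fun x y : Fin ℓ' × Fin s => Y (embB hle x) y) * genJordanBlock F s ℓ' p
      = genJordanBlock F s ℓ' p * (Matrix.of fun x y : Fin ℓ' × Fin s => Y (embB hle x) y) := by
  have hJ : ∀ w z : Fin ℓ' × Fin s, genJordanBlock F s ℓ' p w z
      = genJordanBlock F s ℓ p (embB hle w) (embB hle z) := by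
    intro w z
    rw [genJordanBlock_apply, genJordanBlock_apply]
    simp only [embB, Function.Embedding.coeFn_mk, Fin.val_mk]
    have h1 : ((ℓ - ℓ') + (w.1:ℕ) = (ℓ - ℓ') + (z.1:ℕ)) ↔ ((w.1:ℕ) = (z.1:ℕ)) := by omega
    have h2 : ((ℓ - ℓ') + (w.1:ℕ) = (ℓ - ℓ') + (z.1:ℕ) + 1) ↔ ((w.1:ℕ) = (z.1:ℕ) + 1) := by omega
    rw [if_congr h1.symm rfl (if_congr h2.symm rfl rfl)]
    rfl
  ext x y
  rw [Matrix.mul_apply]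
  have e1 : ∑ w : Fin ℓ' × Fin s,
      (Matrix.of fun x y : Fin ℓ' × Fin s => Y (embB hle x) y) x w * genJordanBlock F s ℓ' p w y
      = (Y * genJordanBlock F s ℓ' p) (embB hle x) y := by
    rw [Matrix.mul_apply]
    exact Finset.sum_congr rfl (fun w _ => by rw [Matrix.of_apply])
  rw [e1, hY, Matrix.mul_apply, Matrix.mul_apply]
  have e2 : ∑ w' : Fin ℓ × Fin s, genJordanBlock F s ℓ p (embB hle x) w' * Y w' y
      = ∑ w : Fin ℓ' × Fin s,
          genJordanBlock F s ℓ p (embB hle x) (embB hle w) * Y (embB hle w) y := by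
    rw [← Finset.sum_map Finset.univ (embB hle)
      (fun w' => genJordanBlock F s ℓ p (embB hle x) w' * Y w' y)]
    symm
    apply Finset.sum_subset (Finset.subset_univ _)
    intro w' _ hw'
    have hlt : (w'.1 : ℕ) < ℓ - ℓ' := by
      by_contra hc
      push_neg at hc
      refine hw' (Finset.mem_map.mpr ⟨(⟨(w'.1 : ℕ) - (ℓ - ℓ'), by have := w'.1.isLt; omega⟩, w'.2),
        Finset.mem_univ _, ?_⟩)
      simp only [embB, Function.Embedding.coeFn_mk]
      exact Prod.ext (Fin.ext (by show ℓ - ℓ' + ((w'.1 : ℕ) - (ℓ - ℓ')) = (w'.1 : ℕ); omega)) rfl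
    rw [hvan w' y hlt, mul_zero]
  rw [e2]
  exact Finset.sum_congr rfl (fun w _ => by rw [Matrix.of_apply, ← hJ])

lemma genJordanForm_diag {m : ℕ} (α : Fin m → ℕ) (p : Polynomial F) (j : Fin m)
    (b y : Fin (α j) × Fin s) :
    genJordanForm F s m α p ⟨j, b⟩ ⟨j, y⟩ = genJordanBlock F s (α j) p b y := by
  simp only [genJordanForm, genJordanBlock, Matrix.of_apply, if_pos rfl]
  by_cases h : b.1 = y.1
  · rw [if_pos h, if_pos (congrArg Fin.val h), if_pos trivial]
  · rw [if_neg h, if_neg (fun hc => h (Fin.ext hc)), if_pos trivial]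

lemma genJordanForm_off {m : ℕ} (α : Fin m → ℕ) (p : Polynomial F) {k j : Fin m}
    (hkj : k ≠ j) (b : Fin (α k) × Fin s) (y : Fin (α j) × Fin s) :
    genJordanForm F s m α p ⟨k, b⟩ ⟨j, y⟩ = 0 := by
  simp only [genJordanForm, Matrix.of_apply]
  rw [if_neg]
  intro hc
  exact hkj hc

lemma block_intertwine {m : ℕ} (α : Fin m → ℕ) (p : Polynomial F)
    (X : Matrix (Σ i : Fin m, Fin (α i) × Fin s) (Σ i : Fin m, Fin (α i) × Fin s) F)
    (hX : X * genJordanForm F s m α p = genJordanForm F s m α p * X)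
    (i j : Fin m) :
    (Matrix.of fun (x : Fin (α i) × Fin s) (y : Fin (α j) × Fin s) => X ⟨i, x⟩ ⟨j, y⟩) *
        genJordanBlock F s (α j) p =
      genJordanBlock F s (α i) p *
        (Matrix.of fun (x : Fin (α i) × Fin s) (y : Fin (α j) × Fin s) => X ⟨i, x⟩ ⟨j, y⟩) := by
  ext x y
  have h := congrFun (congrFun hX ⟨i, x⟩) ⟨j, y⟩
  rw [Matrix.mul_apply, Matrix.mul_apply, ← Finset.univ_sigma_univ, Finset.sum_sigma,
    Finset.sum_sigma] at h
  rw [Finset.sum_eq_single j (fun k _ hk => Finset.sum_eq_zero (fun b _ => by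
      rw [genJordanForm_off α p hk b y, mul_zero]))
    (fun hj => absurd (Finset.mem_univ j) hj)] at h
  rw [Finset.sum_eq_single i (fun k _ hk => Finset.sum_eq_zero (fun b _ => by
      rw [genJordanForm_off α p (Ne.symm hk) x b, zero_mul]))
    (fun hj => absurd (Finset.mem_univ i) hj)] at h
  rw [Matrix.mul_apply, Matrix.mul_apply]
  calc ∑ w : Fin (α j) × Fin s,
        (Matrix.of fun (x : Fin (α i) × Fin s) (y : Fin (α j) × Fin s) => X ⟨i, x⟩ ⟨j, y⟩) x w *
          genJordanBlock F s (α j) p w y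
      = ∑ w : Fin (α j) × Fin s, X ⟨i, x⟩ ⟨j, w⟩ * genJordanForm F s m α p ⟨j, w⟩ ⟨j, y⟩ :=
        Finset.sum_congr rfl (fun w _ => by rw [Matrix.of_apply, genJordanForm_diag])
    _ = ∑ w : Fin (α i) × Fin s, genJordanForm F s m α p ⟨i, x⟩ ⟨i, w⟩ * X ⟨i, w⟩ ⟨j, y⟩ := h
    _ = ∑ w : Fin (α i) × Fin s, genJordanBlock F s (α i) p x w *
          (Matrix.of fun (x : Fin (α i) × Fin s) (y : Fin (α j) × Fin s) => X ⟨i, x⟩ ⟨j, y⟩) w y :=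
        Finset.sum_congr rfl (fun w _ => by rw [Matrix.of_apply, genJordanForm_diag])

end Helpers

/-- if `X` commutes with the generalized Jordan form `G = diag(G_1,…,G_m)`
with Segre characteristic `α_1 ≥ … ≥ α_m ≥ 1`, then each block `X_{i,j}` (of size
`sα_i × sα_j`) satisfies: if `α_i = α_j` it commutes with `G_i`; if `α_i < α_j` its
last `s(α_j-α_i)` columns vanish and its left square submatrix commutes with `G_i`;
if `α_i > α_j` its first `s(α_i-α_j)` rows vanish and its bottom square submatrix
commutes with `G_j`. -/
theorem centralizer_genJordanForm
    {F : Type*} [Field F] {s m : ℕ}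
    (α : Fin m → ℕ) (hα : Antitone α) (hα1 : ∀ i, 1 ≤ α i)
    (p : Polynomial F) (hmonic : p.Monic) (hirr : Irreducible p)
    (hdeg : p.natDegree = s)
    (X : Matrix (Σ i : Fin m, Fin (α i) × Fin s) (Σ i : Fin m, Fin (α i) × Fin s) F)
    (hX : X * genJordanForm F s m α p = genJordanForm F s m α p * X) :
    ∀ i j : Fin m,
      (∀ h : α i = α j,
        (Matrix.of fun x y : Fin (α i) × Fin s =>
            X ⟨i, x⟩ ⟨j, (Fin.cast h y.1, y.2)⟩) * genJordanBlock F s (α i) p =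
          genJordanBlock F s (α i) p *
            (Matrix.of fun x y : Fin (α i) × Fin s =>
              X ⟨i, x⟩ ⟨j, (Fin.cast h y.1, y.2)⟩)) ∧
      (∀ _hlt : α i < α j,
        ((∀ (x : Fin (α i) × Fin s) (y : Fin (α j) × Fin s),
            α i ≤ (y.1 : ℕ) → X ⟨i, x⟩ ⟨j, y⟩ = 0) ∧
          (Matrix.of fun x y : Fin (α i) × Fin s =>
              X ⟨i, x⟩ ⟨j, (⟨(y.1 : ℕ), by have := y.1.isLt; omega⟩, y.2)⟩) *
              genJordanBlock F s (α i) p =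
            genJordanBlock F s (α i) p *
              (Matrix.of fun x y : Fin (α i) × Fin s =>
                X ⟨i, x⟩ ⟨j, (⟨(y.1 : ℕ), by have := y.1.isLt; omega⟩, y.2)⟩))) ∧
      (∀ _hgt : α j < α i,
        ((∀ (x : Fin (α i) × Fin s) (y : Fin (α j) × Fin s),
            (x.1 : ℕ) < α i - α j → X ⟨i, x⟩ ⟨j, y⟩ = 0) ∧
          (Matrix.of fun x y : Fin (α j) × Fin s =>
              X ⟨i, (⟨α i - α j + (x.1 : ℕ), by have := x.1.isLt; omega⟩, x.2)⟩ ⟨j, y⟩) *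
              genJordanBlock F s (α j) p =
            genJordanBlock F s (α j) p *
              (Matrix.of fun x y : Fin (α j) × Fin s =>
                X ⟨i, (⟨α i - α j + (x.1 : ℕ), by have := x.1.isLt; omega⟩, x.2)⟩
                  ⟨j, y⟩))) := by
  have hs : 0 < s := hdeg ▸ hirr.natDegree_pos
  intro i j
  set Y : Matrix (Fin (α i) × Fin s) (Fin (α j) × Fin s) F :=
    Matrix.of fun x y => X ⟨i, x⟩ ⟨j, y⟩ with hYdef
  have hY := block_intertwine α p X hX i j
  refine ⟨?_, ?_, ?_⟩
  · intro h
    have hle : α i ≤ α j := le_of_eq h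
    have hvan : ∀ (x : Fin (α i) × Fin s) (w : Fin (α j) × Fin s),
        α i ≤ (w.1 : ℕ) → Y x w = 0 := by
      intro x w hw
      have := w.1.isLt
      omega
    exact subblock_comm_left p hle Y hY hvan
  · intro hlt
    have hvan := vanish_cols hs p hmonic hdeg hlt Y hY
    exact ⟨hvan, subblock_comm_left p (le_of_lt hlt) Y hY hvan⟩
  · intro hgt
    have hvan := vanish_rows hs p hmonic hdeg hgt Y hY
    exact ⟨hvan, subblock_comm_bottom p (le_of_lt hgt) Y hY hvan⟩
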